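/- Let G be a group, R a commutative ring (e.g., R = ℂ), α: G → Rˣ a group homomorphism, and f: G → R a crossed homomorphism with respect to α, i.e., f(uv) = f(u) + α(u)·f(v) for all u, v ∈ G. Then f vanishes on the second derived subgroup: f(g) = 0 for every g ∈ G^{(2)}, where G^{(0)} = G and G^{(k+1)} = [G^{(k)}, G^{(k)}]. -/

import Mathlib

open scoped commutatorElement

/-- A crossed homomorphism `f : G → R` with respect to `α : G →* Rˣ` vanishes on the
second derived subgroup `G⁽²⁾`. -/
theorem crossed_hom_vanishes_on_second_derived {G : Type*} [Group G] {R : Type*} [CommRing R]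
    (α : G →* Rˣ) (f : G → R)
    (hf : ∀ u v : G, f (u * v) = f u + (α u : R) * f v) :
    ∀ g ∈ derivedSeries G 2, f g = 0 := by
  -- α kills the first derived subgroup
  have hα : ∀ g ∈ derivedSeries G 1, α g = 1 := by
    have hle : derivedSeries G 1 ≤ α.ker := by
      show ⁅(⊤ : Subgroup G), ⊤⁆ ≤ α.ker
      rw [Subgroup.commutator_le]
      intro p _ q _
      rw [MonoidHom.mem_ker, map_commutatorElement]
      exact commutatorElement_eq_one_iff_commute.mpr (mul_comm _ _)
    intro g hg
    exact hle hg
  have f1 : f (1 : G) = 0 := by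
    have := hf 1 1
    simpa using this
  have hinv : ∀ u ∈ derivedSeries G 1, f u⁻¹ = - f u := by
    intro u hu
    have h := hf u u⁻¹
    rw [mul_inv_cancel, f1, hα u hu] at h
    simp at h
    linear_combination -h
  have key : ∀ p ∈ derivedSeries G 1, ∀ q ∈ derivedSeries G 1, f ⁅p, q⁆ = 0 := by
    intro p hp q hq
    have hαp := hα p hp
    have hαq := hα q hq
    have hαpi := hα p⁻¹ ((derivedSeries G 1).inv_mem hp)
    have h1 := hinv p hp
    have h2 := hinv q hq
    rw [commutatorElement_def, hf, hf, hf, h1, h2]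
    simp [map_mul, hαp, hαq, hαpi]
  intro g hg
  -- build the subgroup of elements of D1 on which f vanishes
  let H : Subgroup G :=
    { carrier := {g : G | g ∈ derivedSeries G 1 ∧ f g = 0}
      one_mem' := ⟨(derivedSeries G 1).one_mem, f1⟩
      mul_mem' := by
        rintro a b ⟨ha, hfa⟩ ⟨hb, hfb⟩
        exact ⟨(derivedSeries G 1).mul_mem ha hb, by rw [hf, hα a ha, hfa, hfb]; simp⟩
      inv_mem' := by
        rintro a ⟨ha, hfa⟩
        exact ⟨(derivedSeries G 1).inv_mem ha, by rw [hinv a ha, hfa, neg_zero]⟩ }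
  have hle : derivedSeries G 2 ≤ H := by
    show ⁅derivedSeries G 1, derivedSeries G 1⁆ ≤ H
    rw [Subgroup.commutator_le]
    intro p hp q hq
    refine ⟨?_, key p hp q hq⟩
    rw [commutatorElement_def]
    exact (derivedSeries G 1).mul_mem ((derivedSeries G 1).mul_mem
      ((derivedSeries G 1).mul_mem hp hq) ((derivedSeries G 1).inv_mem hp))
      ((derivedSeries G 1).inv_mem hq)
  exact (hle hg).2
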